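/- Let I ⊆ k[x_1,…,x_n] be an ideal, π : k[x_1,…,x_n] → k[x_1,…,x_n]/I the quotient map, M ∈ ℚ^{r×n}, and ℚ^r equipped with the lexicographic order ≻. For a ∈ ℚ^r let V_a be the k-span of the monomials x^α with Mα = a, let F_{⪰a} be the k-span of the monomials with Mα ⪰ a, and let F_{≻a} be the k-span of the monomials with Mα ≻ a. Then for every a ∈ ℚ^r, the k-linear map V_a → π(F_{⪰a})/π(F_{≻a}) sending p to the class of π(p) is surjective with kernel in_M(I) ∩ V_a; hence π(F_{⪰a})/π(F_{≻a}) ≅ V_a/(in_M(I) ∩ V_a) as k-vector spaces. (These isomorphisms assemble into a k-algebra isomorphism between the associated graded algebra of the pushforward filtration on k[x_1,…,x_n]/I and k[x_1,…,x_n]/in_M(I).) -/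

import Mathlib

open MvPolynomial

instance finWellFoundedLT {r : ℕ} : WellFoundedLT (Fin r) := Finite.to_wellFoundedLT

/-- The initial form of a polynomial with respect to a comparison `le` on exponent vectors:
the sum of the terms of `f` whose exponent is `le`-minimal in the support of `f`. -/
noncomputable def initialForm {k : Type} [Field k] {n : ℕ}
    (le : (Fin n →₀ ℕ) → (Fin n →₀ ℕ) → Prop)
    (f : MvPolynomial (Fin n) k) : MvPolynomial (Fin n) k :=
  letI := Classical.decPred fun α : Fin n →₀ ℕ => ∀ β ∈ f.support, le α β
  ∑ α ∈ f.support.filter (fun α => ∀ β ∈ f.support, le α β),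
    monomial α (MvPolynomial.coeff α f)

/-- The initial ideal of `I`: the ideal generated by initial forms of nonzero elements of `I`. -/
noncomputable def initialIdeal {k : Type} [Field k] {n : ℕ}
    (le : (Fin n →₀ ℕ) → (Fin n →₀ ℕ) → Prop)
    (I : Ideal (MvPolynomial (Fin n) k)) : Ideal (MvPolynomial (Fin n) k) :=
  Ideal.span {g | ∃ f ∈ I, f ≠ 0 ∧ g = initialForm le f}

/-- The weight `Mα ∈ ℚ^r` of an exponent vector `α` under the weighting matrix `M`. -/
def mwt {n r : ℕ} (M : Matrix (Fin r) (Fin n) ℚ) (α : Fin n →₀ ℕ) : Fin r → ℚ :=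
  fun i => ∑ j, M i j * (α j : ℚ)

/-- Comparison of exponents by `M`-weight, in the lexicographic order on `ℚ^r`. -/
def mLe {n r : ℕ} (M : Matrix (Fin r) (Fin n) ℚ) : (Fin n →₀ ℕ) → (Fin n →₀ ℕ) → Prop :=
  fun α β => toLex (mwt M α) ≤ toLex (mwt M β)

/-- The weight `u·α ∈ ℚ` of an exponent vector under a single weight vector `u ∈ ℚ^n`. -/
def uwt {n : ℕ} (u : Fin n → ℚ) (α : Fin n →₀ ℕ) : ℚ := ∑ j, u j * (α j : ℚ)

/-- Comparison of exponents by `u`-weight. -/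
def uLe {n : ℕ} (u : Fin n → ℚ) : (Fin n →₀ ℕ) → (Fin n →₀ ℕ) → Prop :=
  fun α β => uwt u α ≤ uwt u β

/-- The span of the monomials whose exponents satisfy the predicate `P`. -/
noncomputable def monSpan {k : Type} [Field k] {n : ℕ} (P : (Fin n →₀ ℕ) → Prop) :
    Submodule k (MvPolynomial (Fin n) k) :=
  Submodule.span k ((fun α => MvPolynomial.monomial α (1 : k)) '' {α | P α})

section AuxLemmas
variable {k : Type} [Field k] {n r : ℕ}

lemma lex_le_total (x y : Lex (Fin r → ℚ)) : x ≤ y ∨ y ≤ x := by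
  have ht : IsTrichotomous (Fin r → ℚ) (Pi.Lex (· < ·) @fun _ => (· < ·)) :=
    Pi.isTrichotomous_lex _ _ (IsWellFounded.wf)
  rcases trichotomous (r := Pi.Lex (· < ·) @fun _ => (· < ·)) (ofLex x) (ofLex y) with h | h | h
  · exact Or.inl (le_of_lt h)
  · exact Or.inl (le_of_eq h)
  · exact Or.inr (le_of_lt h)

lemma lex_lt_of_not_le {x y : Lex (Fin r → ℚ)} (h : ¬ x ≤ y) : y < x := by
  rcases lex_le_total x y with h' | h'
  · exact absurd h' h
  · exact h'.lt_of_ne fun e => h (le_of_eq e.symm)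

lemma mwt_add (M : Matrix (Fin r) (Fin n) ℚ) (α β : Fin n →₀ ℕ) :
    mwt M (α + β) = mwt M α + mwt M β := by
  funext i
  simp [mwt, Finsupp.add_apply, mul_add, Finset.sum_add_distrib, Nat.cast_add]

lemma toLex_mwt_add (M : Matrix (Fin r) (Fin n) ℚ) (α β : Fin n →₀ ℕ) :
    toLex (mwt M (α + β)) = toLex (mwt M α) + toLex (mwt M β) := by
  rw [mwt_add]; rfl

lemma coeff_sum_monomial (s : Finset (Fin n →₀ ℕ)) (c : (Fin n →₀ ℕ) → k) (β : Fin n →₀ ℕ) :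
    coeff β (∑ α ∈ s, monomial α (c α)) = if β ∈ s then c β else 0 := by
  classical
  rw [MvPolynomial.coeff_sum]
  simp [MvPolynomial.coeff_monomial]

lemma exists_lex_min (s : Finset (Fin n →₀ ℕ)) (w : (Fin n →₀ ℕ) → Lex (Fin r → ℚ)) :
    s.Nonempty → ∃ α ∈ s, ∀ β ∈ s, w α ≤ w β := by
  classical
  induction s using Finset.induction_on with
  | empty => intro h; simp at h
  | @insert x s hx ih =>
    intro _
    rcases s.eq_empty_or_nonempty with rfl | hne
    · exact ⟨x, Finset.mem_insert_self _ _, fun β hβ => by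
        rw [Finset.mem_insert] at hβ
        rcases hβ with rfl | hβ
        · exact le_rfl
        · simp at hβ⟩
    · obtain ⟨y, hy, hmin⟩ := ih hne
      rcases lex_le_total (w x) (w y) with h | h
      · exact ⟨x, Finset.mem_insert_self _ _, fun β hβ => by
          rcases Finset.mem_insert.1 hβ with rfl | hβ
          · exact le_rfl
          · exact h.trans (hmin β hβ)⟩
      · exact ⟨y, Finset.mem_insert_of_mem hy, fun β hβ => by
          rcases Finset.mem_insert.1 hβ with rfl | hβ
          · exact h
          · exact hmin β hβ⟩

lemma mem_monSpan {P : (Fin n →₀ ℕ) → Prop} {p : MvPolynomial (Fin n) k} :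
    p ∈ monSpan (k := k) P ↔ ∀ α ∈ p.support, P α := by
  classical
  constructor
  · intro hp
    induction hp using Submodule.span_induction with
    | mem x hx =>
      rcases hx with ⟨α, hα, rfl⟩
      intro β hβ
      rw [MvPolynomial.support_monomial] at hβ
      simp only [one_ne_zero, if_false, Finset.mem_singleton] at hβ
      subst hβ; exact hα
    | zero => simp
    | add x y _ _ hx hy =>
      intro β hβ
      rcases Finset.mem_union.1 (MvPolynomial.support_add hβ) with h | h
      · exact hx β h
      · exact hy β h
    | smul c x _ hx =>
      intro β hβ
      exact hx β (MvPolynomial.support_smul hβ)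
  · intro h
    rw [← support_sum_monomial_coeff p]
    refine Submodule.sum_mem _ fun α hα => ?_
    have : (monomial α (coeff α p) : MvPolynomial (Fin n) k)
        = (coeff α p) • monomial α (1 : k) := by
      rw [MvPolynomial.smul_monomial, smul_eq_mul, mul_one]
    rw [this]
    exact Submodule.smul_mem _ _ (Submodule.subset_span ⟨α, h α hα, rfl⟩)

/-- The part of `f` supported on exponents satisfying `P`. -/

noncomputable def wpart (P : (Fin n →₀ ℕ) → Prop) (f : MvPolynomial (Fin n) k) :
    MvPolynomial (Fin n) k :=
  letI := Classical.decPred P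
  ∑ α ∈ f.support.filter P, monomial α (coeff α f)

lemma coeff_wpart (P : (Fin n →₀ ℕ) → Prop) (f : MvPolynomial (Fin n) k) (β : Fin n →₀ ℕ) :
    letI := Classical.decPred P
    coeff β (wpart P f) = if P β then coeff β f else 0 := by
  letI := Classical.decPred P
  rw [wpart, coeff_sum_monomial]
  by_cases hm : β ∈ f.support
  · by_cases hP : P β <;> simp [Finset.mem_filter, hm, hP]
  · have : coeff β f = 0 := by rwa [MvPolynomial.mem_support_iff, not_ne_iff] at hm
    simp [Finset.mem_filter, hm, this]

lemma wpart_mem (P : (Fin n →₀ ℕ) → Prop) (f : MvPolynomial (Fin n) k) :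
    wpart P f ∈ monSpan (k := k) P := by
  classical
  rw [mem_monSpan]
  intro α hα
  rw [MvPolynomial.mem_support_iff] at hα
  by_contra hP
  rw [coeff_wpart] at hα
  simp only [hP, if_false] at hα
  exact hα rfl

lemma support_wpart_subset (P : (Fin n →₀ ℕ) → Prop) (f : MvPolynomial (Fin n) k) :
    (wpart P f).support ⊆ f.support := by
  classical
  intro α hα
  rw [MvPolynomial.mem_support_iff] at hα ⊢
  rw [coeff_wpart] at hα
  intro h0
  apply hα
  split <;> simp [h0]

lemma wpart_add_wpart_not (P : (Fin n →₀ ℕ) → Prop) (f : MvPolynomial (Fin n) k) :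
    wpart P f + wpart (fun α => ¬ P α) f = f := by
  classical
  ext β
  rw [MvPolynomial.coeff_add, coeff_wpart, coeff_wpart]
  by_cases hP : P β <;> simp [hP]

lemma wpart_eq_self {P : (Fin n →₀ ℕ) → Prop} {f : MvPolynomial (Fin n) k}
    (h : ∀ α ∈ f.support, P α) : wpart P f = f := by
  classical
  ext β
  rw [coeff_wpart]
  by_cases hβ : β ∈ f.support
  · simp [h β hβ]
  · rw [MvPolynomial.mem_support_iff, not_ne_iff] at hβ
    simp [hβ]

lemma wpart_eq_zero {P : (Fin n →₀ ℕ) → Prop} {f : MvPolynomial (Fin n) k}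
    (h : ∀ α ∈ f.support, ¬ P α) : wpart P f = 0 := by
  classical
  ext β
  rw [coeff_wpart]
  by_cases hβ : β ∈ f.support
  · simp [h β hβ]
  · rw [MvPolynomial.mem_support_iff, not_ne_iff] at hβ
    simp [hβ]

lemma wpart_add (P : (Fin n →₀ ℕ) → Prop) (f g : MvPolynomial (Fin n) k) :
    wpart P (f + g) = wpart P f + wpart P g := by
  classical
  ext β
  rw [MvPolynomial.coeff_add, coeff_wpart, coeff_wpart, coeff_wpart, MvPolynomial.coeff_add]
  split <;> simp

lemma wpart_smul (P : (Fin n →₀ ℕ) → Prop) (c : k) (f : MvPolynomial (Fin n) k) :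
    wpart P (c • f) = c • wpart P f := by
  classical
  ext β
  rw [MvPolynomial.coeff_smul, coeff_wpart, coeff_wpart, MvPolynomial.coeff_smul]
  split <;> simp

lemma coeff_initialForm (le : (Fin n →₀ ℕ) → (Fin n →₀ ℕ) → Prop)
    (f : MvPolynomial (Fin n) k) (β : Fin n →₀ ℕ) :
    letI := Classical.decPred fun α : Fin n →₀ ℕ => ∀ γ ∈ f.support, le α γ
    coeff β (initialForm le f) =
      if β ∈ f.support ∧ ∀ γ ∈ f.support, le β γ then coeff β f else 0 := by
  classical
  rw [initialForm, coeff_sum_monomial]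
  simp [Finset.mem_filter]

lemma initialForm_add_eq {M : Matrix (Fin r) (Fin n) ℚ} {a : Lex (Fin r → ℚ)}
    {p q : MvPolynomial (Fin n) k}
    (hp : ∀ α ∈ p.support, toLex (mwt M α) = a)
    (hq : ∀ α ∈ q.support, a < toLex (mwt M α))
    (hp0 : p ≠ 0) :
    initialForm (mLe M) (p + q) = p := by
  classical
  have hdisj : ∀ β, β ∈ p.support → β ∉ q.support := fun β h1 h2 =>
    absurd (hp β h1 ▸ hq β h2) (lt_irrefl a)
  have hcq : ∀ β ∈ p.support, coeff β q = 0 := fun β h => by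
    have := hdisj β h; rwa [MvPolynomial.mem_support_iff, not_ne_iff] at this
  have hcp : ∀ β ∈ q.support, coeff β p = 0 := fun β h => by
    by_contra hc
    exact hdisj β (MvPolynomial.mem_support_iff.2 hc) h
  have hsupp : (p + q).support = p.support ∪ q.support := by
    ext β
    simp only [MvPolynomial.mem_support_iff, Finset.mem_union, MvPolynomial.coeff_add]
    constructor
    · intro h
      by_contra hc
      push_neg at hc
      exact h (by rw [hc.1, hc.2, add_zero])
    · rintro (h | h)
      · rw [hcq β (MvPolynomial.mem_support_iff.2 h), add_zero]; exact h
      · rw [hcp β (MvPolynomial.mem_support_iff.2 h), zero_add]; exact h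
  obtain ⟨α0, hα0⟩ : p.support.Nonempty := by
    rw [Finset.nonempty_iff_ne_empty]
    intro h; exact hp0 (MvPolynomial.support_eq_empty.1 h)
  have hfil : ∀ α, (α ∈ (p + q).support ∧ ∀ β ∈ (p + q).support, mLe M α β)
      ↔ α ∈ p.support := by
    intro α
    simp only [hsupp, Finset.mem_union]
    constructor
    · rintro ⟨hmem | hmem, hmin⟩
      · exact hmem
      · exfalso
        have h1 : toLex (mwt M α) ≤ toLex (mwt M α0) := hmin α0 (Or.inl hα0)
        rw [hp α0 hα0] at h1
        exact absurd (lt_of_lt_of_le (hq α hmem) h1) (lt_irrefl _)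
    · intro hmem
      refine ⟨Or.inl hmem, ?_⟩
      rintro β (hβ | hβ)
      · exact le_of_eq (by rw [hp α hmem, hp β hβ])
      · exact (hp α hmem).le.trans (le_of_lt (hq β hβ))
  ext β
  rw [coeff_initialForm]
  by_cases hmem : β ∈ p.support
  · rw [if_pos ((hfil β).2 hmem), MvPolynomial.coeff_add, hcq β hmem, add_zero]
  · rw [if_neg (fun hc => hmem ((hfil β).1 hc))]
    exact (by rwa [MvPolynomial.mem_support_iff, not_ne_iff] at hmem : coeff β p = 0).symm

lemma initialForm_spec (M : Matrix (Fin r) (Fin n) ℚ) {f : MvPolynomial (Fin n) k} (hf : f ≠ 0) :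
    ∃ b : Lex (Fin r → ℚ),
      initialForm (mLe M) f ≠ 0 ∧
      (∀ α ∈ (initialForm (mLe M) f).support, toLex (mwt M α) = b) ∧
      (∀ α ∈ (f - initialForm (mLe M) f).support, b < toLex (mwt M α)) := by
  classical
  have hne : f.support.Nonempty := by
    rw [Finset.nonempty_iff_ne_empty]
    intro h; exact hf (MvPolynomial.support_eq_empty.1 h)
  obtain ⟨α0, hα0s, hmin⟩ := exists_lex_min f.support (fun α => toLex (mwt M α)) hne
  have hc1 : ∀ β, (β ∈ f.support ∧ ∀ γ ∈ f.support, mLe M β γ) →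
      coeff β (initialForm (mLe M) f) = coeff β f := fun β h => by
    rw [coeff_initialForm, if_pos h]
  have hc2 : ∀ β, ¬ (β ∈ f.support ∧ ∀ γ ∈ f.support, mLe M β γ) →
      coeff β (initialForm (mLe M) f) = 0 := fun β h => by
    rw [coeff_initialForm, if_neg h]
  refine ⟨toLex (mwt M α0), ?_, ?_, ?_⟩
  · intro h0
    have h1 : coeff α0 (initialForm (mLe M) f) = coeff α0 f := hc1 α0 ⟨hα0s, hmin⟩
    rw [h0, MvPolynomial.coeff_zero] at h1
    exact (MvPolynomial.mem_support_iff.1 hα0s) h1.symm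
  · intro α hα
    rw [MvPolynomial.mem_support_iff] at hα
    have hcond : α ∈ f.support ∧ ∀ γ ∈ f.support, mLe M α γ := by
      by_contra hcnd; rw [hc2 α hcnd] at hα; exact hα rfl
    exact le_antisymm (hcond.2 α0 hα0s) (hmin α hcond.1)
  · intro α hα
    rw [MvPolynomial.mem_support_iff, MvPolynomial.coeff_sub] at hα
    by_cases hcond : α ∈ f.support ∧ ∀ γ ∈ f.support, mLe M α γ
    · rw [hc1 α hcond, sub_self] at hα; exact absurd rfl hα
    · rw [hc2 α hcond, sub_zero] at hα
      have hαs : α ∈ f.support := MvPolynomial.mem_support_iff.2 hα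
      have hnall : ¬ ∀ γ ∈ f.support, mLe M α γ := fun h => hcond ⟨hαs, h⟩
      push_neg at hnall
      obtain ⟨γ, hγ, hle⟩ := hnall
      exact lt_of_le_of_lt (hmin γ hγ) (lex_lt_of_not_le hle)

lemma initialForm_monomial_mul (M : Matrix (Fin r) (Fin n) ℚ) (β : Fin n →₀ ℕ)
    {f : MvPolynomial (Fin n) k} (hf : f ≠ 0) :
    initialForm (mLe M) (monomial β (1 : k) * f)
      = monomial β (1 : k) * initialForm (mLe M) f := by
  classical
  obtain ⟨b, h0, hb, hgt⟩ := initialForm_spec M hf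
  set pf := initialForm (mLe M) f with hpf
  have hmono : (monomial β (1 : k) : MvPolynomial (Fin n) k) ≠ 0 := by
    rw [Ne, MvPolynomial.monomial_eq_zero]; exact one_ne_zero
  have hmul : monomial β (1 : k) * f = monomial β 1 * pf + monomial β 1 * (f - pf) := by ring
  rw [hmul]
  refine initialForm_add_eq (a := toLex (mwt M β) + b) ?_ ?_ (mul_ne_zero hmono h0)
  · intro α hα
    rw [MvPolynomial.mem_support_iff, MvPolynomial.coeff_monomial_mul'] at hα
    by_cases hle : β ≤ α
    · rw [if_pos hle, one_mul] at hα
      have hsub : α - β ∈ pf.support := MvPolynomial.mem_support_iff.2 hα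
      have heq : α = β + (α - β) := by
        rw [add_comm]; exact (tsub_add_cancel_of_le hle).symm
      rw [show toLex (mwt M α) = toLex (mwt M β) + toLex (mwt M (α - β)) by
        conv_lhs => rw [heq, toLex_mwt_add]]
      rw [hb _ hsub]
    · rw [if_neg hle] at hα; exact absurd rfl hα
  · intro α hα
    rw [MvPolynomial.mem_support_iff, MvPolynomial.coeff_monomial_mul'] at hα
    by_cases hle : β ≤ α
    · rw [if_pos hle, one_mul] at hα
      have hsub : α - β ∈ (f - pf).support := MvPolynomial.mem_support_iff.2 hα
      have heq : α = β + (α - β) := by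
        rw [add_comm]; exact (tsub_add_cancel_of_le hle).symm
      rw [show toLex (mwt M α) = toLex (mwt M β) + toLex (mwt M (α - β)) by
        conv_lhs => rw [heq, toLex_mwt_add]]
      exact (add_lt_add_iff_left _).2 (hgt _ hsub)
    · rw [if_neg hle] at hα; exact absurd rfl hα

lemma mul_mem_span_initialForms (M : Matrix (Fin r) (Fin n) ℚ)
    (I : Ideal (MvPolynomial (Fin n) k)) (g : MvPolynomial (Fin n) k)
    {x : MvPolynomial (Fin n) k}
    (hx : x ∈ Submodule.span k {h | ∃ f ∈ I, f ≠ 0 ∧ h = initialForm (mLe M) f}) :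
    g * x ∈ Submodule.span k {h | ∃ f ∈ I, f ≠ 0 ∧ h = initialForm (mLe M) f} := by
  induction hx using Submodule.span_induction with
  | mem y hy =>
    obtain ⟨f, hfI, hf0, rfl⟩ := hy
    rw [← support_sum_monomial_coeff g, Finset.sum_mul]
    refine Submodule.sum_mem _ fun β hβ => ?_
    have h1 : (monomial β (coeff β g) : MvPolynomial (Fin n) k) * initialForm (mLe M) f
        = (coeff β g) • (monomial β (1 : k) * initialForm (mLe M) f) := by
      rw [← smul_mul_assoc, MvPolynomial.smul_monomial, smul_eq_mul, mul_one]
    rw [h1, ← initialForm_monomial_mul M β hf0]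
    have hmono : (monomial β (1 : k) : MvPolynomial (Fin n) k) ≠ 0 := by
      rw [Ne, MvPolynomial.monomial_eq_zero]; exact one_ne_zero
    exact Submodule.smul_mem _ _ (Submodule.subset_span
      ⟨monomial β 1 * f, I.mul_mem_left _ hfI, mul_ne_zero hmono hf0, rfl⟩)
  | zero => rw [mul_zero]; exact Submodule.zero_mem _
  | add x y _ _ hx hy => rw [mul_add]; exact Submodule.add_mem _ hx hy
  | smul c x _ hx => rw [mul_smul_comm]; exact Submodule.smul_mem _ _ hx

lemma initialIdeal_le_spanK (M : Matrix (Fin r) (Fin n) ℚ)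
    (I : Ideal (MvPolynomial (Fin n) k)) {x : MvPolynomial (Fin n) k}
    (hx : x ∈ initialIdeal (mLe M) I) :
    x ∈ Submodule.span k {h | ∃ f ∈ I, f ≠ 0 ∧ h = initialForm (mLe M) f} := by
  let T' : Ideal (MvPolynomial (Fin n) k) :=
    { carrier := Submodule.span k {h | ∃ f ∈ I, f ≠ 0 ∧ h = initialForm (mLe M) f}
      add_mem' := fun h1 h2 => Submodule.add_mem _ h1 h2
      zero_mem' := Submodule.zero_mem _
      smul_mem' := fun c x hx => by
        simpa [smul_eq_mul] using mul_mem_span_initialForms M I c hx }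
  have hle : initialIdeal (mLe M) I ≤ T' :=
    Ideal.span_le.2 fun y hy => Submodule.subset_span hy
  exact hle hx

end AuxLemmas

/-- **The associated graded algebra of a weight quasivaluation** (Lemma `lem-gr_v-in_w`).
For each `a ∈ ℚ^r`, the map sending `p` in the span `V_a` of the monomials of `M`-weight `a`
to the class of `π p` in `π(F_{⪰a})/π(F_{≻a})` is surjective with kernel `in_M(I) ∩ V_a`;
hence `π(F_{⪰a})/π(F_{≻a}) ≅ V_a/(in_M(I) ∩ V_a)`, and these assemble into
`gr(k[x]/I) ≅ k[x]/in_M(I)`. -/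
theorem stmt_13 {k : Type} [Field k] {n r : ℕ}
    (I : Ideal (MvPolynomial (Fin n) k)) (M : Matrix (Fin r) (Fin n) ℚ)
    (a : Lex (Fin r → ℚ)) :
    (∀ y ∈ Submodule.map (Ideal.Quotient.mkₐ k I).toLinearMap
        (monSpan fun α : Fin n →₀ ℕ => a ≤ toLex (mwt M α)),
      ∃ p ∈ monSpan (k := k) fun α : Fin n →₀ ℕ => toLex (mwt M α) = a,
        Ideal.Quotient.mkₐ k I p - y ∈
          Submodule.map (Ideal.Quotient.mkₐ k I).toLinearMap
            (monSpan fun α : Fin n →₀ ℕ => a < toLex (mwt M α))) ∧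
    (∀ p ∈ monSpan (k := k) fun α : Fin n →₀ ℕ => toLex (mwt M α) = a,
      (Ideal.Quotient.mkₐ k I p ∈
          Submodule.map (Ideal.Quotient.mkₐ k I).toLinearMap
            (monSpan fun α : Fin n →₀ ℕ => a < toLex (mwt M α)) ↔
        p ∈ initialIdeal (mLe M) I)) := by
  classical
  constructor
  · rintro y ⟨f, hf, rfl⟩
    refine ⟨wpart (fun α => toLex (mwt M α) = a) f, wpart_mem _ f, ?_⟩
    set p := wpart (fun α => toLex (mwt M α) = a) f with hp
    set q := wpart (fun α => ¬ toLex (mwt M α) = a) f with hqdef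
    have hpq : p + q = f := wpart_add_wpart_not _ f
    have hq : q ∈ monSpan (k := k) fun α => a < toLex (mwt M α) := by
      rw [mem_monSpan]
      intro α hα
      have h1 : ¬ toLex (mwt M α) = a := (mem_monSpan.1 (wpart_mem _ f)) α hα
      have h2 : a ≤ toLex (mwt M α) := (mem_monSpan.1 hf) α (support_wpart_subset _ f hα)
      exact h2.lt_of_ne fun e => h1 e.symm
    refine Submodule.mem_map.2 ⟨-q, Submodule.neg_mem _ hq, ?_⟩
    have heq : -q = p - f := by rw [← hpq]; ring
    rw [heq]
    simp [map_sub]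
  · intro p hp
    constructor
    · rintro ⟨h, hh, hhe⟩
      simp only [AlgHom.toLinearMap_apply] at hhe
      by_cases hp0 : p = 0
      · subst hp0; exact Submodule.zero_mem _
      · have hfI : p - h ∈ I := by
          have h2 : (Ideal.Quotient.mkₐ k I) (p - h) = 0 := by
            rw [map_sub, hhe, sub_self]
          rwa [Ideal.Quotient.mkₐ_eq_mk, Ideal.Quotient.eq_zero_iff_mem] at h2
        have hne : p - h ≠ 0 := by
          intro h0
          have hph : p = h := sub_eq_zero.1 h0
          obtain ⟨α, hα⟩ : p.support.Nonempty := by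
            rw [Finset.nonempty_iff_ne_empty]
            intro hc; exact hp0 (MvPolynomial.support_eq_empty.1 hc)
          have e1 : toLex (mwt M α) = a := mem_monSpan.1 hp α hα
          have e2 : a < toLex (mwt M α) := mem_monSpan.1 hh α (hph ▸ hα)
          exact absurd (e1 ▸ e2) (lt_irrefl a)
        have key : initialForm (mLe M) (p - h) = p := by
          have hsub : p - h = p + (-h) := by ring
          rw [hsub]
          refine initialForm_add_eq (mem_monSpan.1 hp) ?_ hp0
          intro α hα
          exact mem_monSpan.1 hh α (by rwa [MvPolynomial.support_neg] at hα)
        exact Ideal.subset_span ⟨p - h, hfI, hne, key.symm⟩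
    · intro hpI
      have hsp := initialIdeal_le_spanK M I hpI
      have claim : ∀ x ∈ Submodule.span k {h | ∃ f ∈ I, f ≠ 0 ∧ h = initialForm (mLe M) f},
          (Ideal.Quotient.mkₐ k I) (wpart (fun α => toLex (mwt M α) = a) x) ∈
            Submodule.map (Ideal.Quotient.mkₐ k I).toLinearMap
              (monSpan fun α : Fin n →₀ ℕ => a < toLex (mwt M α)) := by
        intro x hx
        induction hx using Submodule.span_induction with
        | mem y hy =>
          obtain ⟨f, hfI, hf0, rfl⟩ := hy
          obtain ⟨b, h0, hb, hgt⟩ := initialForm_spec M hf0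
          by_cases hba : b = a
          · subst hba
            have hwp : wpart (fun α => toLex (mwt M α) = b) (initialForm (mLe M) f)
                = initialForm (mLe M) f := wpart_eq_self hb
            rw [hwp]
            refine Submodule.mem_map.2
              ⟨-(f - initialForm (mLe M) f), Submodule.neg_mem _ ?_, ?_⟩
            · rw [mem_monSpan]; exact hgt
            · have hfz : (Ideal.Quotient.mkₐ k I) f = 0 := by
                rw [Ideal.Quotient.mkₐ_eq_mk, Ideal.Quotient.eq_zero_iff_mem]; exact hfI
              simp [map_sub, hfz]
          · have hwp : wpart (fun α => toLex (mwt M α) = a) (initialForm (mLe M) f) = 0 :=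
              wpart_eq_zero fun α hα e => hba ((hb α hα).symm.trans e)
            rw [hwp, map_zero]
            exact Submodule.zero_mem _
        | zero =>
          have : wpart (fun α => toLex (mwt M α) = a) (0 : MvPolynomial (Fin n) k) = 0 :=
            wpart_eq_zero fun α hα => by simp at hα
          rw [this, map_zero]
          exact Submodule.zero_mem _
        | add x y _ _ hx hy =>
          rw [wpart_add, map_add]
          exact Submodule.add_mem _ hx hy
        | smul c x _ hx =>
          rw [wpart_smul, map_smul]
          exact Submodule.smul_mem _ _ hx
      have hwp : wpart (fun α => toLex (mwt M α) = a) p = p := wpart_eq_self (mem_monSpan.1 hp)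
      have hres := claim p hsp
      rwa [hwp] at hres
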